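/- Let s ≥ 1 and n be natural numbers with n ≥ 2(s−1), and let p be a homogeneous real polynomial of degree n in two variables x, y satisfying Δ^s p = 0. Then there exist homogeneous harmonic polynomials h_0, h_1, …, h_{s−1}, with h_j of degree n−2j, such that p = Σ_{j=0}^{s−1} r^{2j}·h_j; equivalently, Ker(Δ^s : P_n → P_{n−2s}) = ⊕_{j=0}^{s−1} r^{2j}·H_{n−2j}. -/

import Mathlib

open MvPolynomial

/-- The Laplacian on polynomials in two variables. -/
noncomputable def pLap (p : MvPolynomial (Fin 2) ℝ) : MvPolynomial (Fin 2) ℝ :=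
  pderiv 0 (pderiv 0 p) + pderiv 1 (pderiv 1 p)

namespace AlmansiAux

noncomputable abbrev rr : MvPolynomial (Fin 2) ℝ := X 0 ^ 2 + X 1 ^ 2

noncomputable def pLapL : MvPolynomial (Fin 2) ℝ →ₗ[ℝ] MvPolynomial (Fin 2) ℝ :=
  ((pderiv 0 : Derivation ℝ _ _).toLinearMap ∘ₗ (pderiv 0 : Derivation ℝ _ _).toLinearMap) +
  ((pderiv 1 : Derivation ℝ _ _).toLinearMap ∘ₗ (pderiv 1 : Derivation ℝ _ _).toLinearMap)

lemma pLap_eq (p : MvPolynomial (Fin 2) ℝ) : pLap p = pLapL p := rfl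

lemma pLap_sub (p q : MvPolynomial (Fin 2) ℝ) : pLap (p - q) = pLap p - pLap q := by
  simp [pLap_eq, map_sub]

lemma pLap_smul (c : ℝ) (p : MvPolynomial (Fin 2) ℝ) : pLap (c • p) = c • pLap p := by
  simp [pLap_eq, map_smul]

lemma pLap_sum {ι : Type*} (s : Finset ι) (f : ι → MvPolynomial (Fin 2) ℝ) :
    pLap (∑ i ∈ s, f i) = ∑ i ∈ s, pLap (f i) := by
  simp [pLap_eq, map_sum]

@[simp] lemma pderiv_natCast' (i : Fin 2) (n : ℕ) :
    pderiv i ((n : MvPolynomial (Fin 2) ℝ)) = 0 := by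
  rw [show ((n : ℕ) : MvPolynomial (Fin 2) ℝ) = C ((n : ℕ) : ℝ) by exact (map_natCast (C : ℝ →+* MvPolynomial (Fin 2) ℝ) n).symm]
  exact pderiv_C

@[simp] lemma pderiv_two' (i : Fin 2) : pderiv i (2 : MvPolynomial (Fin 2) ℝ) = 0 := by
  rw [show (2 : MvPolynomial (Fin 2) ℝ) = C (2 : ℝ) by
    rw [← map_ofNat (C : ℝ →+* MvPolynomial (Fin 2) ℝ) 2]]
  exact pderiv_C

@[simp] lemma pderiv_X01 : pderiv (0 : Fin 2) (X 1 : MvPolynomial (Fin 2) ℝ) = 0 :=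
  pderiv_X_of_ne (by decide)
@[simp] lemma pderiv_X10 : pderiv (1 : Fin 2) (X 0 : MvPolynomial (Fin 2) ℝ) = 0 :=
  pderiv_X_of_ne (by decide)

lemma drr0 : pderiv (0 : Fin 2) rr = 2 * X 0 := by simp [rr, pderiv_pow]
lemma drr1 : pderiv (1 : Fin 2) rr = 2 * X 1 := by simp [rr, pderiv_pow]

lemma rr_pow_cancel (k : ℕ) :
    (k : MvPolynomial (Fin 2) ℝ) * rr ^ (k - 1) * rr = (k : MvPolynomial (Fin 2) ℝ) * rr ^ k := by
  cases k with
  | zero => simp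
  | succ k => rw [Nat.add_sub_cancel, pow_succ]; ring

lemma deg_two (d : Fin 2 →₀ ℕ) : d.degree = d 0 + d 1 := by
  rw [Finsupp.degree_apply, Finset.sum_subset (Finset.subset_univ _)
    (fun i _ hi => Finsupp.notMem_support_iff.mp hi), Fin.sum_univ_two]

lemma deg_two' (d : Fin 2 →₀ ℕ) : (Finsupp.weight 1) d = d 0 + d 1 := by
  rw [show (Finsupp.weight 1 : (Fin 2 →₀ ℕ) →+ ℕ) = Finsupp.weight (fun _ => 1) from rfl,
    ← Finsupp.degree_eq_weight_one (R := ℕ), deg_two]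

lemma single_le {i : Fin 2} {d : Fin 2 →₀ ℕ} (h : 0 < d i) : Finsupp.single i 1 ≤ d := by
  intro j
  classical
  by_cases hj : j = i
  · subst hj; simpa [Finsupp.single_apply] using Nat.succ_le_of_lt h
  · simp [Finsupp.single_apply, Ne.symm hj]

lemma pderiv_isHom {p : MvPolynomial (Fin 2) ℝ} {n : ℕ} (i : Fin 2)
    (hp : p.IsHomogeneous n) : (pderiv i p).IsHomogeneous (n - 1) := by
  rw [← p.support_sum_monomial_coeff, map_sum]
  apply IsHomogeneous.sum
  intro d hd
  rw [pderiv_monomial]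
  rcases Nat.eq_zero_or_pos (d i) with h | h
  · rw [h]; simp [isHomogeneous_zero]
  · apply isHomogeneous_monomial
    have hdn : (Finsupp.weight 1) d = n := hp (Finsupp.mem_support_iff.mp hd)
    rw [deg_two'] at hdn
    rw [deg_two]
    have e0 : (d - Finsupp.single i 1 : Fin 2 →₀ ℕ) 0 = d 0 - (Finsupp.single i 1) 0 :=
      Finsupp.tsub_apply d (Finsupp.single i 1) 0
    have e1 : (d - Finsupp.single i 1 : Fin 2 →₀ ℕ) 1 = d 1 - (Finsupp.single i 1) 1 :=
      Finsupp.tsub_apply d (Finsupp.single i 1) 1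
    fin_cases i <;> simp [Finsupp.single_apply] at e0 e1 h ⊢ <;> omega

lemma euler {p : MvPolynomial (Fin 2) ℝ} {n : ℕ} (hp : p.IsHomogeneous n) :
    X 0 * pderiv 0 p + X 1 * pderiv 1 p = (n : MvPolynomial (Fin 2) ℝ) * p := by
  have key : ∀ (i : Fin 2) (d : Fin 2 →₀ ℕ) (c : ℝ),
      X i * pderiv i (monomial d c) = (d i : MvPolynomial (Fin 2) ℝ) * monomial d c := by
    intro i d c
    rw [pderiv_monomial]
    rcases Nat.eq_zero_or_pos (d i) with h | h
    · simp [h]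
    · rw [X, monomial_mul, add_tsub_cancel_of_le (single_le h)]
      rw [show ((d i : ℕ) : MvPolynomial (Fin 2) ℝ) = C ((d i : ℕ) : ℝ) by simp]
      rw [C_mul_monomial]
      ring_nf
  conv_lhs => rw [← p.support_sum_monomial_coeff]
  rw [map_sum, map_sum, Finset.mul_sum, Finset.mul_sum, ← Finset.sum_add_distrib]
  conv_rhs => rw [← p.support_sum_monomial_coeff, Finset.mul_sum]
  apply Finset.sum_congr rfl
  intro d hd
  rw [key, key]
  have hdn : (Finsupp.weight 1) d = n := hp (Finsupp.mem_support_iff.mp hd)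
  rw [deg_two'] at hdn
  rw [← hdn]
  push_cast
  ring

lemma pLap_isHom {p : MvPolynomial (Fin 2) ℝ} {n : ℕ} (hp : p.IsHomogeneous n) :
    (pLap p).IsHomogeneous (n - 2) := by
  have h0 := pderiv_isHom 0 (pderiv_isHom (p := p) 0 hp)
  have h1 := pderiv_isHom 1 (pderiv_isHom (p := p) 1 hp)
  rw [show n - 1 - 1 = n - 2 by omega] at h0 h1
  exact h0.add h1

lemma key_lap (k m : ℕ) (g : MvPolynomial (Fin 2) ℝ) (hg : g.IsHomogeneous m)
    (hΔ : pLap g = 0) :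
    pLap (rr ^ (k + 1) * g)
      = (((4 * (k + 1) * (k + 1 + m)) : ℕ) : MvPolynomial (Fin 2) ℝ) * (rr ^ k * g) := by
  have hΔ' : pderiv 0 (pderiv 0 g) + pderiv 1 (pderiv 1 g) = 0 := hΔ
  have K := rr_pow_cancel k
  have E := euler hg
  simp only [pLap, pderiv_mul, pderiv_pow, drr0, drr1, Nat.add_sub_cancel, map_add, map_mul,
    pderiv_natCast', pderiv_two', pderiv_X01, pderiv_X10, pderiv_X_self, pderiv_one, map_zero]
  push_cast
  linear_combination (4 * ((k:MvPolynomial (Fin 2) ℝ) + 1) * rr ^ k) * E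
    + rr ^ (k + 1) * hΔ' + (4 * ((k:MvPolynomial (Fin 2) ℝ) + 1) * g) * K

lemma isHom_smul {p : MvPolynomial (Fin 2) ℝ} {n : ℕ} (c : ℝ) (hp : p.IsHomogeneous n) :
    (c • p).IsHomogeneous n := by
  rw [smul_eq_C_mul]; exact hp.C_mul c

lemma isHom_sub {p q : MvPolynomial (Fin 2) ℝ} {n : ℕ} (hp : p.IsHomogeneous n)
    (hq : q.IsHomogeneous n) : (p - q).IsHomogeneous n :=
  (homogeneousSubmodule (Fin 2) ℝ n).sub_mem hp hq

lemma isHom_cast {p : MvPolynomial (Fin 2) ℝ} {a b : ℕ} (h : a = b) (hp : p.IsHomogeneous a) :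
    p.IsHomogeneous b := h ▸ hp

lemma rr_isHom : (rr).IsHomogeneous 2 :=
  (isHomogeneous_X_pow 0 2).add (isHomogeneous_X_pow 1 2)

lemma aux : ∀ (s n : ℕ) (p : MvPolynomial (Fin 2) ℝ), 2 * s ≤ n + 2 → p.IsHomogeneous n →
    pLap^[s] p = 0 →
    ∃ h : ℕ → MvPolynomial (Fin 2) ℝ,
      (∀ j, j < s → (h j).IsHomogeneous (n - 2 * j) ∧ pLap (h j) = 0) ∧
      p = ∑ j ∈ Finset.range s, rr ^ j * h j := by
  intro s
  induction s with
  | zero =>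
    intro n p _ _ hker
    refine ⟨fun _ => 0, by omega, ?_⟩
    simpa using hker
  | succ s IH =>
    intro n p hn hp hker
    have hq_ker : pLap^[s] (pLap p) = 0 := by
      rw [← Function.iterate_succ_apply]; exact hker
    obtain ⟨g, hg, hsum⟩ := IH (n - 2) (pLap p) (by omega) (pLap_isHom hp) hq_ker
    set c : ℕ → ℝ := fun j => ((4 * (j + 1) * (n - 1 - j) : ℕ) : ℝ)⁻¹ with hc
    -- key fact: for j < s, pLap of the lifted term recovers rr^j * g j
    have hlift : ∀ j, j < s → pLap (c j • (rr ^ (j + 1) * g j)) = rr ^ j * g j := by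
      intro j hj
      have h2j : 2 * (j + 1) ≤ n := by omega
      have hdeg : (j + 1) + (n - 2 - 2 * j) = n - 1 - j := by omega
      have hkey := key_lap j (n - 2 - 2 * j) (g j)
        (isHom_cast (by omega) (hg j hj).1) (hg j hj).2
      rw [pLap_smul, hkey]
      rw [show ((4 * (j + 1) * (j + 1 + (n - 2 - 2 * j)) : ℕ) : MvPolynomial (Fin 2) ℝ)
        = C ((4 * (j + 1) * (j + 1 + (n - 2 - 2 * j)) : ℕ) : ℝ) by
          exact (map_natCast (C : ℝ →+* MvPolynomial (Fin 2) ℝ) _).symm]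
      rw [← smul_eq_C_mul, smul_smul, hc]
      have hne : ((4 * (j + 1) * (n - 1 - j) : ℕ) : ℝ) ≠ 0 := by
        have : 1 ≤ n - 1 - j := by omega
        positivity
      rw [hdeg, inv_mul_cancel₀ hne, one_smul]
    refine ⟨fun t => match t with
      | 0 => p - ∑ j ∈ Finset.range s, c j • (rr ^ (j + 1) * g j)
      | (j + 1) => if j < s then c j • g j else 0, ?_, ?_⟩
    · intro j hj
      match j with
      | 0 =>
        constructor
        · apply isHom_cast (show n = n - 2 * 0 by omega)
          apply isHom_sub hp
          apply IsHomogeneous.sum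
          intro j hj'
          have hj'' : j < s := Finset.mem_range.mp hj'
          apply isHom_smul
          apply isHom_cast (show 2 * (j + 1) + (n - 2 - 2 * j) = n by omega)
          exact (rr_isHom.pow (j + 1)).mul (isHom_cast (by omega) (hg j hj'').1)
        · rw [pLap_sub, pLap_sum]
          rw [Finset.sum_congr rfl (fun j hj' => hlift j (Finset.mem_range.mp hj'))]
          rw [← hsum, sub_self]
      | (t + 1) =>
        have ht : t < s := by omega
        show (if t < s then c t • g t else 0).IsHomogeneous (n - 2 * (t + 1)) ∧
          pLap (if t < s then c t • g t else 0) = 0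
        rw [if_pos ht]
        refine ⟨?_, ?_⟩
        · apply isHom_cast (show n - 2 - 2 * t = n - 2 * (t + 1) by omega)
          exact isHom_smul _ (hg t ht).1
        · rw [pLap_smul, (hg t ht).2, smul_zero]
    · rw [Finset.sum_range_succ']
      have : ∀ j ∈ Finset.range s,
          rr ^ (j + 1) * (if j < s then c j • g j else 0) = c j • (rr ^ (j + 1) * g j) := by
        intro j hj'
        rw [if_pos (Finset.mem_range.mp hj'), mul_smul_comm]
      rw [Finset.sum_congr rfl this]
      ring

end AlmansiAux

theorem almansi_expansion_homogeneous
    (s n : ℕ) (hs : 1 ≤ s) (hn : 2 * (s - 1) ≤ n)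
    (p : MvPolynomial (Fin 2) ℝ) (hp : p.IsHomogeneous n) (hker : pLap^[s] p = 0) :
    ∃ h : ℕ → MvPolynomial (Fin 2) ℝ,
      (∀ j, j < s → (h j).IsHomogeneous (n - 2 * j) ∧ pLap (h j) = 0) ∧
      p = ∑ j ∈ Finset.range s, (X 0 ^ 2 + X 1 ^ 2) ^ j * h j := by
  exact AlmansiAux.aux s n p (by omega) hp hker
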